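/- The von Neumann entropy of a density matrix M (i.e., −∑_k λ_k log λ_k where λ_k are eigenvalues of the positive semidefinite Hermitian matrix M with trace 1) is at most the sum over all entries of −|m_{ij}| log |m_{ij}| (entrywise Shannon entropy), with the convention 0 log 0 = 0. -/

import Mathlib

open ComplexOrder

theorem vonNeumann_entropy_le_entrywise_entropy {n : ℕ}
    (M : Matrix (Fin n) (Fin n) ℂ) (hM : M.PosSemidef) (htr : M.trace = 1) :
    -∑ k, (hM.1.eigenvalues k * Real.log (hM.1.eigenvalues k)) ≤
      ∑ i, ∑ j, -(‖M i j‖ * Real.log (‖M i j‖)) := by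
  classical
  set f := Real.negMulLog with hf
  set U : Matrix (Fin n) (Fin n) ℂ := (hM.1.eigenvectorUnitary : Matrix (Fin n) (Fin n) ℂ) with hU
  set lam : Fin n → ℝ := hM.1.eigenvalues with hlam
  set w : Fin n → Fin n → ℝ := fun i k => ‖U i k‖ ^ 2 with hw
  have hlam0 : ∀ k, 0 ≤ lam k := fun k => hM.eigenvalues_nonneg k
  have hw0 : ∀ i k, 0 ≤ w i k := fun i k => sq_nonneg _
  -- entry formula
  have hMij : ∀ i j, M i j = ∑ k, U i k * (lam k : ℂ) * (starRingEnd ℂ) (U j k) := by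
    intro i j
    nth_rewrite 1 [hM.1.spectral_theorem]
    simp [Matrix.mul_apply, Matrix.mul_diagonal, Matrix.star_apply, Matrix.diagonal_apply, Finset.mul_sum, mul_ite, mul_zero, ite_mul, zero_mul, hU, hlam]
  -- row sums of w equal 1
  have hrow : ∀ i, ∑ k, w i k = 1 := by
    intro i
    have h1 : (U * star U) i i = 1 := by
      rw [(Matrix.mem_unitaryGroup_iff).mp hM.1.eigenvectorUnitary.2]
      simp
    rw [Matrix.mul_apply] at h1
    have : ∑ k, ((w i k : ℝ) : ℂ) = 1 := by
      rw [← h1]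
      refine Finset.sum_congr rfl fun k _ => ?_
      simp [hw, Matrix.star_apply, Complex.mul_conj, Complex.normSq_eq_norm_sq]
    exact_mod_cast this
  -- column sums of w equal 1
  have hcol : ∀ k, ∑ i, w i k = 1 := by
    intro k
    have h1 : (star U * U) k k = 1 := by
      rw [hU, Unitary.coe_star_mul_self]
      simp
    rw [Matrix.mul_apply] at h1
    have : ∑ i, ((w i k : ℝ) : ℂ) = 1 := by
      rw [← h1]
      refine Finset.sum_congr rfl fun i _ => ?_
      rw [Matrix.star_apply]
      rw [mul_comm]
      simp [hw, Complex.mul_conj, Complex.normSq_eq_norm_sq]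
    exact_mod_cast this
  set d : Fin n → ℝ := fun i => ∑ k, w i k * lam k with hd
  have hd0 : ∀ i, 0 ≤ d i :=
    fun i => Finset.sum_nonneg fun k _ => mul_nonneg (hw0 i k) (hlam0 k)
  have hMii : ∀ i, M i i = (d i : ℂ) := by
    intro i
    rw [hMij i i, hd]
    push_cast
    refine Finset.sum_congr rfl fun k _ => ?_
    have : U i i * (lam i:ℂ) = 0 ∨ True := Or.inr trivial
    rw [mul_comm (U i k) ((lam k : ℂ)), mul_assoc, Complex.mul_conj]
    simp [hw, Complex.normSq_eq_norm_sq]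
    ring
  have habsMii : ∀ i, ‖M i i‖ = d i := by
    intro i
    rw [hMii i, Complex.norm_real, Real.norm_of_nonneg (hd0 i)]
  -- sum of d is 1
  have hdsum : ∑ i, d i = 1 := by
    have h1 : M.trace = ((∑ i, d i : ℝ) : ℂ) := by
      rw [Matrix.trace]
      push_cast
      exact Finset.sum_congr rfl fun i _ => hMii i
    rw [htr] at h1
    exact_mod_cast h1.symm
  have hd1 : ∀ i, d i ≤ 1 := by
    intro i
    rw [← hdsum]
    exact Finset.single_le_sum (fun j _ => hd0 j) (Finset.mem_univ i)
  -- off-diagonal bound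
  have habs_le : ∀ i j, ‖M i j‖ ≤ 1 := by
    intro i j
    have h1 : ‖M i j‖ ≤ ∑ k, lam k * (‖U i k‖ * ‖U j k‖) := by
      rw [hMij i j]
      refine le_trans (norm_sum_le _ _) (le_of_eq ?_)
      refine Finset.sum_congr rfl fun k _ => ?_
      rw [norm_mul, norm_mul, Complex.norm_real, Complex.norm_conj,
        Real.norm_of_nonneg (hlam0 k)]
      ring
    have h2 : ∑ k, lam k * (‖U i k‖ * ‖U j k‖) ≤
        (d i + d j) / 2 := by
      rw [hd, ← Finset.sum_add_distrib, Finset.sum_div]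
      refine Finset.sum_le_sum fun k _ => ?_
      have := two_mul_le_add_sq (‖U i k‖) (‖U j k‖)
      have h0 := hlam0 k
      simp only [hw]
      nlinarith
    nlinarith [hd1 i, hd1 j, h1, h2]
  -- rewrite goal with f
  have hgoal : (-∑ k, (lam k * Real.log (lam k)) = ∑ k, f (lam k)) := by
    rw [← Finset.sum_neg_distrib]
    exact Finset.sum_congr rfl fun k _ => by rw [hf, Real.negMulLog, neg_mul]
  have hgoalR : ∀ i j, -(‖M i j‖ * Real.log (‖M i j‖))
      = f (‖M i j‖) := fun i j => by rw [hf, Real.negMulLog, neg_mul]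
  rw [hgoal]
  calc ∑ k, f (lam k) = ∑ i, ∑ k, w i k * f (lam k) := by
        rw [Finset.sum_comm]
        refine Finset.sum_congr rfl fun k _ => ?_
        rw [← Finset.sum_mul, hcol k, one_mul]
    _ ≤ ∑ i, f (d i) := by
        refine Finset.sum_le_sum fun i _ => ?_
        have := Real.concaveOn_negMulLog.le_map_sum (t := Finset.univ)
          (w := w i) (p := lam) (fun k _ => hw0 i k) (hrow i)
          (fun k _ => Set.mem_Ici.mpr (hlam0 k))
        simpa [smul_eq_mul, hd] using this
    _ ≤ ∑ i, ∑ j, f (‖M i j‖) := by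
        refine Finset.sum_le_sum fun i _ => ?_
        have : f (d i) = f (‖M i i‖) := by rw [habsMii i]
        rw [this]
        refine Finset.single_le_sum (f := fun j => f (‖M i j‖)) (fun j _ => ?_) (Finset.mem_univ i)
        exact Real.negMulLog_nonneg (norm_nonneg _) (habs_le i j)
    _ = ∑ i, ∑ j, -(‖M i j‖ * Real.log (‖M i j‖)) := by
        refine Finset.sum_congr rfl fun i _ => Finset.sum_congr rfl fun j _ => ?_
        rw [hgoalR i j]
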